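/- Let A be a Leibniz algebra and N : A → A a linear map such that both ∘ and the contracted product ∘_N satisfy the Leibniz Jacobi identity. Then for every scalar λ the product X • Y = X∘_N Y + λ X∘Y also satisfies the Leibniz Jacobi identity (i.e. ∘_N and ∘ are compatible Leibniz products). -/
import Mathlib


/-- If both the Leibniz product `∘` and the contracted product
`∘_N` satisfy the Leibniz Jacobi identity, then for every scalar `λ` the
product `X • Y = X ∘_N Y + λ X ∘ Y` satisfies the Leibniz Jacobi identity,
i.e. `∘_N` and `∘` are compatible Leibniz products. -/
theorem contracted_compatible
    {A : Type*} [AddCommGroup A] [Module ℝ A]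
    (m : A →ₗ[ℝ] A →ₗ[ℝ] A) (N : A →ₗ[ℝ] A)
    (jacobi : ∀ X Y Z : A, m (m X Y) Z = m X (m Y Z) - m Y (m X Z))
    (cN : A → A → A)
    (hcN : ∀ X Y : A, cN X Y = m (N X) Y + m X (N Y) - N (m X Y))
    (jacobiN : ∀ X Y Z : A, cN (cN X Y) Z = cN X (cN Y Z) - cN Y (cN X Z)) :
    ∀ lam : ℝ, ∀ X Y Z : A,
      (fun (U V : A) => cN U V + lam • m U V) ((fun (U V : A) => cN U V + lam • m U V) X Y) Z
        = (fun (U V : A) => cN U V + lam • m U V) X ((fun (U V : A) => cN U V + lam • m U V) Y Z)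
          - (fun (U V : A) => cN U V + lam • m U V) Y ((fun (U V : A) => cN U V + lam • m U V) X Z) := by
  intro lam X Y Z
  have h := jacobiN X Y Z
  simp only [hcN, map_add, map_sub, map_smul, LinearMap.add_apply, LinearMap.sub_apply,
    LinearMap.smul_apply, smul_add, smul_sub, jacobi] at h ⊢
  linear_combination (norm := module) h
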